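/- Let H ≥ 1 be an integer and define the step sizes α_t = (H+1)/(H+t) for integers t ≥ 1, and for 1 ≤ i ≤ τ set α_τ^i := α_i · ∏_{j=i+1}^{τ} (1 − α_j). Then for every integer τ ≥ 1, 1/√τ ≤ Σ_{i=1}^{τ} α_τ^i / √i ≤ 2/√τ. -/

import Mathlib

open Finset

/-- Property 1 of the step-size weights of Jin et al. (2018):
`1/√τ ≤ Σ_{i=1}^τ α_τ^i / √i ≤ 2/√τ`. -/
theorem stepsize_weights_sqrt_bounds
    (H : ℕ) (hH : 1 ≤ H)
    (α : ℕ → ℝ) (hα : ∀ t, α t = ((H : ℝ) + 1) / ((H : ℝ) + t))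
    (w : ℕ → ℕ → ℝ)
    (hw : ∀ τ i, w τ i = α i * ∏ j ∈ Icc (i + 1) τ, (1 - α j)) :
    ∀ τ : ℕ, 1 ≤ τ →
      1 / Real.sqrt τ ≤ ∑ i ∈ Icc 1 τ, w τ i / Real.sqrt i ∧
      ∑ i ∈ Icc 1 τ, w τ i / Real.sqrt i ≤ 2 / Real.sqrt τ := by
  intro τ hτ
  induction τ with
  | zero => omega
  | succ n ih =>
    by_cases hn : n = 0
    · subst hn
      have hH1 : (H:ℝ) + 1 ≠ 0 := by positivity
      have hw11 : w 1 1 = 1 := by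
        rw [hw, hα]
        rw [show Icc (1+1) 1 = (∅ : Finset ℕ) from Finset.Icc_eq_empty (by omega)]
        simp [div_self hH1]
      simp only [show (0:ℕ)+1 = 1 from rfl, Finset.Icc_self, Finset.sum_singleton, hw11,
        Nat.cast_one, Real.sqrt_one]
      norm_num
    · have hn1 : 1 ≤ n := Nat.one_le_iff_ne_zero.mpr hn
      obtain ⟨ih1, ih2⟩ := ih hn1
      set Sn := ∑ i ∈ Icc 1 n, w n i / Real.sqrt i with hSn
      -- basic facts about α (n+1)
      have hden : (0:ℝ) < (H:ℝ) + (n+1) := by positivity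
      have hαval : α (n+1) = ((H:ℝ)+1) / ((H:ℝ) + (n+1)) := by
        rw [hα]; push_cast; ring_nf
      have hα_pos : 0 < α (n+1) := by rw [hαval]; positivity
      have hα_le : α (n+1) ≤ 1 := by
        rw [hαval, div_le_one hden]
        have : (0:ℝ) ≤ (n:ℝ) := Nat.cast_nonneg n
        linarith
      have h1α : 1 - α (n+1) = (n:ℝ) / ((H:ℝ) + (n+1)) := by
        rw [hαval]; field_simp; try ring
      -- recursion
      have hrec : ∑ i ∈ Icc 1 (n+1), w (n+1) i / Real.sqrt i
          = (1 - α (n+1)) * Sn + α (n+1) / Real.sqrt (n+1) := by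
        rw [Finset.sum_Icc_succ_top (by omega : 1 ≤ n+1)]
        push_cast
        have hlast : w (n+1) (n+1) = α (n+1) := by
          rw [hw]
          rw [show Icc (n+1+1) (n+1) = (∅ : Finset ℕ) from Finset.Icc_eq_empty (by omega)]
          simp
        rw [hlast, hSn, Finset.mul_sum]
        congr 1
        refine Finset.sum_congr rfl ?_
        intro i hi
        rw [Finset.mem_Icc] at hi
        rw [hw (n+1) i, Finset.prod_Icc_succ_top (by omega : i+1 ≤ n+1), hw n i]
        ring
      have hs : Real.sqrt n > 0 := Real.sqrt_pos.mpr (by positivity)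
      have ht : Real.sqrt ((n:ℝ)+1) > 0 := Real.sqrt_pos.mpr (by positivity)
      have hcast : ((n+1 : ℕ) : ℝ) = (n:ℝ) + 1 := by push_cast; ring
      rw [hrec, hcast]
      have hst : Real.sqrt n ≤ Real.sqrt ((n:ℝ)+1) := Real.sqrt_le_sqrt (by linarith)
      constructor
      · -- lower bound
        have h1 : 1 / Real.sqrt ((n:ℝ)+1) ≤ 1 / Real.sqrt n := by
          apply div_le_div_of_nonneg_left (by norm_num) hs hst
        have h2 : (1 - α (n+1)) * (1 / Real.sqrt ((n:ℝ)+1)) ≤ (1 - α (n+1)) * Sn := by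
          apply mul_le_mul_of_nonneg_left (le_trans h1 ih1) (by linarith)
        calc 1 / Real.sqrt ((n:ℝ)+1)
            = (1 - α (n+1)) * (1 / Real.sqrt ((n:ℝ)+1)) + α (n+1) / Real.sqrt ((n:ℝ)+1) := by
              ring
          _ ≤ (1 - α (n+1)) * Sn + α (n+1) / Real.sqrt ((n:ℝ)+1) := by linarith
      · -- upper bound
        have h2 : (1 - α (n+1)) * Sn ≤ (1 - α (n+1)) * (2 / Real.sqrt n) :=
          mul_le_mul_of_nonneg_left ih2 (by linarith)
        have key : (1 - α (n+1)) * (2 / Real.sqrt n) + α (n+1) / Real.sqrt ((n:ℝ)+1)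
            ≤ 2 / Real.sqrt ((n:ℝ)+1) := by
          rw [h1α, hαval]
          have hs2 : Real.sqrt n ^ 2 = (n:ℝ) := Real.sq_sqrt (by positivity)
          have ht2 : Real.sqrt ((n:ℝ)+1) ^ 2 = (n:ℝ)+1 := Real.sq_sqrt (by positivity)
          have hHn : (0:ℝ) ≤ (H:ℝ) := Nat.cast_nonneg H
          have e1 : (n:ℝ)/((H:ℝ)+((n:ℝ)+1)) * (2/Real.sqrt n)
              = 2*Real.sqrt n/((H:ℝ)+((n:ℝ)+1)) := by
            have hnn : (n:ℝ) = Real.sqrt n * Real.sqrt n :=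
              (Real.mul_self_sqrt (Nat.cast_nonneg n)).symm
            field_simp; linear_combination hnn
          have e2 : ((H:ℝ)+1)/((H:ℝ)+((n:ℝ)+1))/Real.sqrt ((n:ℝ)+1)
              = ((H:ℝ)+1)/(((H:ℝ)+((n:ℝ)+1))*Real.sqrt ((n:ℝ)+1)) := by rw [div_div]
          rw [e1, e2, div_add_div _ _ (ne_of_gt hden) (by positivity),
            div_le_div_iff₀ (by positivity) ht]
          have key2 : 2*Real.sqrt n*Real.sqrt ((n:ℝ)+1) + ((H:ℝ)+1)
              ≤ 2*((H:ℝ)+((n:ℝ)+1)) := by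
            nlinarith [sq_nonneg (Real.sqrt n - Real.sqrt ((n:ℝ)+1)), hs2, ht2, hHn]
          nlinarith [mul_nonneg (sub_nonneg.mpr key2) (mul_pos hden ht).le, hs.le, ht.le,
            mul_pos hden ht]
        linarith
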